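/- arXiv:1106.1482 — 2 statements merged into one kernel-verified Lean document; each statement's English description precedes it below -/
import Mathlib

section
/- Let K be a field of characteristic zero and let F : ℕ → K be a sequence with F_n ≠ 0 for all n ≥ 1. Fix integers r, s ≥ 1 and elements g₁, g₂ ∈ K. Then the identity F_{r+s} = g₁·F_r + g₂·F_s holds if and only if the F-binomial recurrence C_F(r+s, r) = g₁·C_F(r+s−1, r−1) + g₂·C_F(r+s−1, r) holds. -/
/-- The `F`-factorial: `ffact F 0 = 1`, `ffact F n = F n * F (n-1) * ... * F 1`. -/
def ffact {K : Type*} [Field K] (F : ℕ → K) : ℕ → K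
  | 0 => 1
  | n + 1 => F (n + 1) * ffact F n

/-- The `F`-binomial coefficient `C_F(n, k) = F_n! / (F_k! * F_{n-k}!)`. -/
def fbinom {K : Type*} [Field K] (F : ℕ → K) (n k : ℕ) : K :=
  ffact F n / (ffact F k * ffact F (n - k))

lemma ffact_ne_zero {K : Type*} [Field K] (F : ℕ → K)
    (hF : ∀ n, 1 ≤ n → F n ≠ 0) : ∀ n, ffact F n ≠ 0
  | 0 => one_ne_zero
  | n + 1 => mul_ne_zero (hF _ (Nat.succ_le_succ (Nat.zero_le n)))
      (ffact_ne_zero F hF n)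

theorem stmt0 {K : Type*} [Field K] [CharZero K] (F : ℕ → K)
    (hF : ∀ n, 1 ≤ n → F n ≠ 0) (r s : ℕ) (hr : 1 ≤ r) (hs : 1 ≤ s)
    (g₁ g₂ : K) :
    F (r + s) = g₁ * F r + g₂ * F s ↔
      fbinom F (r + s) r =
        g₁ * fbinom F (r + s - 1) (r - 1) + g₂ * fbinom F (r + s - 1) r := by
  obtain ⟨a, rfl⟩ : ∃ a, r = a + 1 := ⟨r - 1, by omega⟩
  obtain ⟨b, rfl⟩ : ∃ b, s = b + 1 := ⟨s - 1, by omega⟩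
  have h1 : (a + 1) + (b + 1) = (a + b + 1) + 1 := by ring
  have h2 : (a + 1) + (b + 1) - 1 = a + b + 1 := by omega
  have h3 : (a + 1) - 1 = a := by omega
  have h4 : (a + b + 1) + 1 - (a + 1) = b + 1 := by omega
  have h5 : (a + b + 1) - a = b + 1 := by omega
  have h6 : (a + b + 1) - (a + 1) = b := by omega
  have hfa := ffact_ne_zero F hF a
  have hfa1 := ffact_ne_zero F hF (a + 1)
  have hfb := ffact_ne_zero F hF b
  have hfb1 := ffact_ne_zero F hF (b + 1)
  have hfab := ffact_ne_zero F hF (a + b + 1)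
  have hFa1 : F (a + 1) ≠ 0 := hF _ (by omega)
  have hFb1 : F (b + 1) ≠ 0 := hF _ (by omega)
  have ea : ffact F (a + 1) = F (a + 1) * ffact F a := rfl
  have eb : ffact F (b + 1) = F (b + 1) * ffact F b := rfl
  have eab : ffact F ((a + b + 1) + 1) = F ((a + b + 1) + 1) * ffact F (a + b + 1) := rfl
  rw [h1]
  unfold fbinom
  have k1 : a + b + 1 + 1 - 1 = a + b + 1 := by omega
  rw [k1, h3, h4, h5, h6, eab, ea, eb]
  set A := F (a + b + 1 + 1) with hA
  set B := F (a + 1) with hB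
  set C := F (b + 1) with hC
  set P := ffact F (a + b + 1) with hP
  set Q := ffact F a with hQ
  set R := ffact F b with hR
  rw [div_eq_iff (by exact mul_ne_zero (mul_ne_zero hFa1 hfa) (mul_ne_zero hFb1 hfb))]
  constructor
  · intro h
    field_simp
    linear_combination h
  · intro h
    field_simp at h
    have hPQR : P * Q^2 * R^2 * B * C ≠ 0 := by
      apply_rules [mul_ne_zero, pow_ne_zero]
    refine mul_left_cancel₀ hPQR ?_
    linear_combination (P * Q^2 * R^2 * B * C) * h
end

section
/- Let K be a field of characteristic zero, let p, q ∈ K be distinct nonzero elements, set t = −p·q, define U_n = (p^n − q^n)/(p − q) and V_n = p^n + q^n, and assume U_n ≠ 0 and V_n ≠ 0 for all n ≥ 1. Then for all integers r, s ≥ 1, the V-mixed-U binomial coefficients satisfy M(r, s) = U_{s+1}·M(r−1, s) + t·V_{r−1}·M(r, s−1). -/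
/-- The `V`-mixed-`U` binomial coefficient `M(r, s) = V_{r+s}! / (V_r! * U_s!)`. -/
def mixedBinom {K : Type*} [Field K] (V U : ℕ → K) (r s : ℕ) : K :=
  ffact V (r + s) / (ffact V r * ffact U s)

lemma ffact_ne {K : Type*} [Field K] (F : ℕ → K) (h : ∀ n, 1 ≤ n → F n ≠ 0) :
    ∀ n, ffact F n ≠ 0
  | 0 => one_ne_zero
  | n + 1 => mul_ne_zero (h (n+1) (Nat.le_add_left 1 n)) (ffact_ne F h n)

theorem stmt3 {K : Type*} [Field K] [CharZero K] (p q : K)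
    (hp : p ≠ 0) (hq : q ≠ 0) (hpq : p ≠ q) (t : K) (ht : t = -(p * q))
    (U V : ℕ → K)
    (hU : ∀ n, U n = (p ^ n - q ^ n) / (p - q))
    (hV : ∀ n, V n = p ^ n + q ^ n)
    (hUne : ∀ n, 1 ≤ n → U n ≠ 0) (hVne : ∀ n, 1 ≤ n → V n ≠ 0) :
    ∀ r s : ℕ, 1 ≤ r → 1 ≤ s →
      mixedBinom V U r s =
        U (s + 1) * mixedBinom V U (r - 1) s +
          t * V (r - 1) * mixedBinom V U r (s - 1) := by
  have hpq' : p - q ≠ 0 := sub_ne_zero.mpr hpq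
  rintro (_|a) (_|b) hr hs
  · omega
  · omega
  · omega
  · -- r = a+1, s = b+1
    have hadd : V (a + b + 2) = U (b + 2) * V (a + 1) + t * V a * U (b + 1) := by
      rw [hV, hV, hV, hU, hU, ht]
      field_simp
      ring
    have hVA := ffact_ne V hVne
    have hUA := ffact_ne U hUne
    simp only [mixedBinom, Nat.add_sub_cancel]
    have e1 : a + 1 + (b + 1) = (a + b + 1) + 1 := by omega
    have e2 : a + (b + 1) = a + b + 1 := by omega
    have e3 : a + 1 + b = a + b + 1 := by omega
    rw [e1, e2, e3]
    simp only [ffact]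
    rw [show a+b+1+1 = a+b+2 from rfl, hadd]
    have h1 := hVne (a+1) (by omega)
    have h2 := hUne (b+1) (by omega)
    have h3 := hVA a
    have h4 := hUA b
    generalize V (a+1) = x at h1 ⊢
    generalize U (b+1) = y at h2 ⊢
    generalize ffact V a = z at h3 ⊢
    generalize ffact U b = w at h4 ⊢
    generalize ffact V (a+b+1) = A
    field_simp
end
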